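/- arXiv:1203.0090 — 4 statements merged into one kernel-verified Lean document; each statement's English description precedes it below -/
import Mathlib

section
/- Let M be a matroid with finite ground set E, let X \subseteq E be a circuit-hyperplane of M, and let M' be the relaxation of M at X (the matroid whose bases are the bases of M together with X). Then T_{M'}(x,y) = T_M(x,y) - xy + x + y. -/
open MvPolynomial Finset
open scoped Matroid

namespace TuttePaper

open Classical

variable {α : Type*}

/-- The rank of a set in a matroid: the maximum cardinality of an independent subset. -/
noncomputable def rk (M : Matroid α) (A : Set α) : ℕ :=
  sSup {n | ∃ I, M.Indep I ∧ I ⊆ A ∧ I.ncard = n}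

/-- The Tutte polynomial of a matroid with finite ground set, as an element of ℤ[x,y];
the variable `X 0` plays the role of `x` and `X 1` that of `y`:
`T_M(x,y) = ∑_{A ⊆ E} (x-1)^(r(E)-r(A)) (y-1)^(|A|-r(A))`. -/
noncomputable def tutte (M : Matroid α) : MvPolynomial (Fin 2) ℤ :=
  if hE : M.E.Finite then
    ∑ A ∈ hE.toFinset.powerset,
      (X 0 - 1) ^ (rk M M.E - rk M ↑A) * (X 1 - 1) ^ (A.card - rk M ↑A)
  else 0

/-- The Tutte polynomial with `x` evaluated at `1`, i.e. `T_M(1,y)`, as an element of ℤ[x,y]. -/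
noncomputable def tutteX1 (M : Matroid α) : MvPolynomial (Fin 2) ℤ :=
  eval₂ C (fun i => if i = 0 then 1 else X 1) (tutte M)

/-- A loop of a matroid: an element whose singleton has rank zero. -/
def IsLoop (M : Matroid α) (e : α) : Prop := rk M {e} = 0

/-- A coloop of a matroid: an element contained in every basis. -/
def IsColoop (M : Matroid α) (e : α) : Prop := ∀ B, M.IsBase B → e ∈ B

/-- A circuit of a matroid: a minimal dependent set. -/
def IsCircuit (M : Matroid α) (C : Set α) : Prop :=
  C ⊆ M.E ∧ ¬ M.Indep C ∧ ∀ D ⊂ C, M.Indep D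

/-- A hyperplane of a matroid: a flat of rank `r(M) - 1`. -/
def IsHyperplane (M : Matroid α) (H : Set α) : Prop :=
  M.IsFlat H ∧ rk M H + 1 = rk M M.E

/-- Deletion of a set of elements from a matroid. -/
def deleteSet (M : Matroid α) (D : Set α) : Matroid α := M ↾ (M.E \ D)

/-- Contraction of a set of elements in a matroid, `M/C = (M✶ \ C)✶`. -/
def contractSet (M : Matroid α) (C : Set α) : Matroid α := ((M✶) ↾ (M.E \ C))✶

/-- Deletion of a single element. -/
def deleteElem (M : Matroid α) (e : α) : Matroid α := deleteSet M {e}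

/-- Contraction of a single element. -/
def contractElem (M : Matroid α) (e : α) : Matroid α := contractSet M {e}

/-- A matroid is paving if every circuit has size at least the rank of the matroid. -/
def Paving (M : Matroid α) : Prop := ∀ C, IsCircuit M C → rk M M.E ≤ C.ncard

/-- A matroid is sparse paving if it is paving and any two distinct circuits of size `r(M)`
have symmetric difference of size greater than two. -/
def SparsePaving (M : Matroid α) : Prop :=
  Paving M ∧ ∀ C₁ C₂, IsCircuit M C₁ → IsCircuit M C₂ →
    C₁.ncard = rk M M.E → C₂.ncard = rk M M.E → C₁ ≠ C₂ → 2 < (symmDiff C₁ C₂).ncard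

/-- An `m`-partition of a set `E`: a collection of at least two subsets of `E`, each with at
least `m` elements, such that every `m`-element subset of `E` is contained in exactly one
member of the collection. -/
def IsMPartition (m : ℕ) (E : Set α) (T : Set (Set α)) : Prop :=
  1 < T.ncard ∧ (∀ B ∈ T, B ⊆ E ∧ m ≤ B.ncard) ∧
    ∀ S ⊆ E, S.ncard = m → ∃! B, B ∈ T ∧ S ⊆ B

/-- `tcoef M i j` is the coefficient `t_{ij}` of `x^i y^j` in the Tutte polynomial of `M`. -/
noncomputable def tcoef (M : Matroid α) (i j : ℕ) : ℤ :=
  MvPolynomial.coeff (Finsupp.single (0 : Fin 2) i + Finsupp.single (1 : Fin 2) j) (tutte M)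

/-- The characteristic polynomial `χ_N(λ) = ∑_{A ⊆ E} (-1)^{|A|} λ^{r(E)-r(A)}` of a matroid,
evaluated at an element `l` of a commutative ring. -/
noncomputable def charEval {R : Type*} [CommRing R] (N : Matroid α) (l : R) : R :=
  if hE : N.E.Finite then
    ∑ A ∈ hE.toFinset.powerset, (-1 : R) ^ A.card * l ^ (rk N N.E - rk N ↑A)
  else 0

/-- Crapo's coboundary polynomial `χ̄_M(λ,t) = ∑_{X flat of M} t^{|X|} χ_{M/X}(λ)`,
evaluated at elements `l`, `t` of a commutative ring. -/
noncomputable def cobEval {R : Type*} [CommRing R] (M : Matroid α) (l t : R) : R :=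
  if hE : M.E.Finite then
    (hE.toFinset.powerset.filter (fun F : Finset α => M.IsFlat ↑F)).sum
      (fun F => t ^ F.card * charEval (contractSet M ↑F) l)
  else 0

lemma rk_le_of_forall {M : Matroid α} {A : Set α} {n : ℕ}
    (h : ∀ I, M.Indep I → I ⊆ A → I.ncard ≤ n) : rk M A ≤ n := by
  unfold rk
  have hne : {m | ∃ I, M.Indep I ∧ I ⊆ A ∧ I.ncard = m}.Nonempty :=
    ⟨0, ∅, M.empty_indep, Set.empty_subset A, by simp⟩
  refine csSup_le hne ?_
  rintro m ⟨I, hI, hIA, rfl⟩; exact h I hI hIA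

lemma le_rk {M : Matroid α} (hE : M.E.Finite) {A I : Set α} (hA : A ⊆ M.E)
    (hI : M.Indep I) (hIA : I ⊆ A) : I.ncard ≤ rk M A := by
  unfold rk
  have hbdd : BddAbove {m | ∃ J, M.Indep J ∧ J ⊆ A ∧ J.ncard = m} := by
    refine ⟨A.ncard, ?_⟩
    rintro m ⟨J, hJ, hJA, rfl⟩
    exact Set.ncard_le_ncard hJA (hE.subset hA)
  exact le_csSup hbdd ⟨I, hI, hIA, rfl⟩

/-- the Tutte polynomial of the relaxation `M'` of `M` at a circuit-hyperplane
`Z` satisfies `T_{M'}(x,y) = T_M(x,y) - xy + x + y`. -/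
theorem tutte_relaxation (M M' : Matroid α) (hE : M.E.Finite) (Z : Set α)
    (hC : IsCircuit M Z) (hH : IsHyperplane M Z)
    (hE' : M'.E = M.E) (hB : ∀ B, M'.IsBase B ↔ (M.IsBase B ∨ B = Z)) :
    tutte M' = tutte M - X 0 * X 1 + X 0 + X 1 := by
  classical
  -- basic facts about Z
  obtain ⟨hZE, hZdep, hZss⟩ := hC
  have hZfin : Z.Finite := hE.subset hZE
  have hZne : Z.Nonempty := by
    rcases Z.eq_empty_or_nonempty with rfl | h
    · exact absurd M.empty_indep hZdep
    · exact h
  obtain ⟨e₀, he₀⟩ := hZne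
  have hZpos : 1 ≤ Z.ncard := (Set.ncard_pos hZfin).2 ⟨e₀, he₀⟩
  -- rank of Z in M
  have hrkZ : rk M Z = Z.ncard - 1 := by
    apply IsGreatest.csSup_eq
    constructor
    · refine ⟨Z \ {e₀}, hZss _ ?_, Set.diff_subset, ?_⟩
      · exact Set.sdiff_singleton_ssubset.2 he₀
      · exact Set.ncard_sdiff_singleton_of_mem he₀
    · rintro n ⟨J, hJ, hJZ, rfl⟩
      have hne : J ≠ Z := fun h => hZdep (h ▸ hJ)
      have : J.ncard < Z.ncard :=
        Set.ncard_lt_ncard (hJZ.ssubset_of_ne hne) hZfin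
      omega
  have hcard : Z.ncard = rk M M.E := by
    rw [← hH.2, hrkZ]; omega
  set n := rk M M.E with hn
  have hZneE : Z ≠ M.E := by
    intro h
    have := hH.2
    rw [← h] at this
    omega
  -- indep sets of M'
  have hInd : ∀ I, M'.Indep I ↔ (M.Indep I ∨ I = Z) := by
    intro I
    rw [Matroid.indep_iff]
    constructor
    · rintro ⟨B, hB', hIB⟩
      rcases (hB B).1 hB' with h | hBZ
      · exact Or.inl (Matroid.indep_iff.2 ⟨B, h, hIB⟩)
      · rw [hBZ] at hIB
        by_cases hIZ : I = Z
        · exact Or.inr hIZ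
        · exact Or.inl (hZss I (hIB.ssubset_of_ne hIZ))
    · rintro (hI | hIZ)
      · obtain ⟨B, hBb, hIB⟩ := Matroid.indep_iff.1 hI
        exact ⟨B, (hB B).2 (Or.inl hBb), hIB⟩
      · exact ⟨Z, (hB Z).2 (Or.inr rfl), hIZ.subset⟩
  -- M-rank of sets strictly containing Z
  have hbM : ∀ A : Set α, Z ⊆ A → A ⊆ M.E → A ≠ Z → rk M A = n := by
    intro A hZA hAE hAZ
    have hle : rk M A ≤ n :=
      rk_le_of_forall fun I hI hIA => le_rk hE subset_rfl hI (hIA.trans hAE)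
    refine le_antisymm hle ?_
    obtain ⟨e, heA, heZ⟩ : ∃ e, e ∈ A ∧ e ∉ Z := by
      by_contra h
      push_neg at h
      exact hAZ (le_antisymm h hZA)
    obtain ⟨I, hI⟩ := M.exists_isBasis Z hZE
    have hIZ : I ⊆ Z := hI.subset
    have hIcard : rk M Z = I.ncard := by
      apply IsGreatest.csSup_eq
      refine ⟨⟨I, hI.indep, hIZ, rfl⟩, ?_⟩
      rintro m ⟨J, hJ, hJZ, rfl⟩
      obtain ⟨I', hI', hJI'⟩ := hJ.subset_isBasis_of_subset hJZ hZE
      have hII' : I'.ncard = I.ncard :=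
        hI'.isBase_restrict.ncard_eq_ncard_of_isBase hI.isBase_restrict
      rw [← hII']
      exact Set.ncard_le_ncard hJI' (hZfin.subset hI'.subset)
    have heI : e ∉ I := fun h => heZ (hIZ h)
    have hcl : M.closure I = Z := by
      rw [hI.closure_eq_closure, hH.1.closure]
    have hins : M.Indep (insert e I) := by
      rw [hI.indep.insert_indep_iff_of_notMem heI, hcl]
      exact ⟨hAE heA, heZ⟩
    have hcard' : (insert e I).ncard = n := by
      rw [Set.ncard_insert_of_notMem heI (hZfin.subset hIZ)]
      rw [← hIcard] at *
      omega
    have := le_rk hE hAE hins (Set.insert_subset heA (hIZ.trans hZA))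
    omega
  -- M'-ranks
  have hE'' : M'.E.Finite := hE' ▸ hE
  have haM' : ∀ A : Set α, ¬ Z ⊆ A → rk M' A = rk M A := by
    intro A hZA
    unfold rk
    congr 1
    ext m
    constructor
    · rintro ⟨I, hI, hIA, rfl⟩
      rcases (hInd I).1 hI with h | rfl
      · exact ⟨I, h, hIA, rfl⟩
      · exact absurd hIA hZA
    · rintro ⟨I, hI, hIA, rfl⟩
      exact ⟨I, (hInd I).2 (Or.inl hI), hIA, rfl⟩
  have hbM' : ∀ A : Set α, Z ⊆ A → A ⊆ M.E → A ≠ Z → rk M' A = n := by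
    intro A hZA hAE hAZ
    refine le_antisymm (rk_le_of_forall fun I hI hIA => ?_) ?_
    · rcases (hInd I).1 hI with h | rfl
      · exact le_rk hE subset_rfl h (hIA.trans hAE)
      · omega
    · have := le_rk hE'' (hE' ▸ hAE) ((hInd Z).2 (Or.inr rfl)) hZA
      omega
  have hcM' : rk M' Z = Z.ncard := by
    refine le_antisymm (rk_le_of_forall fun I hI hIA => Set.ncard_le_ncard hIA hZfin) ?_
    exact le_rk hE'' (hE' ▸ hZE) ((hInd Z).2 (Or.inr rfl)) subset_rfl
  have hEM' : rk M' M'.E = n := by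
    rw [hE']
    exact hbM' M.E hZE subset_rfl (Ne.symm hZneE)
  -- the sums
  rw [tutte, tutte, dif_pos hE'', dif_pos hE]
  have hfs : hE''.toFinset = hE.toFinset := by
    ext x; simp [hE']
  rw [hfs]
  set Zf : Finset α := hZfin.toFinset with hZf
  have hZfc : (Zf : Set α) = Z := hZfin.coe_toFinset
  have hZfcard : Zf.card = Z.ncard := (Set.ncard_eq_toFinset_card Z hZfin).symm
  have hZfmem : Zf ∈ hE.toFinset.powerset := by
    rw [Finset.mem_powerset]
    intro x hx
    rw [Set.Finite.mem_toFinset]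
    exact hZE (by rwa [← hZfc, Finset.mem_coe])
  rw [← Finset.sum_erase_add _ _ hZfmem, ← Finset.sum_erase_add _
    (fun A : Finset α => (X 0 - 1) ^ (rk M M.E - rk M ↑A) * (X 1 - 1) ^ (A.card - rk M ↑A)) hZfmem]
  have hsum : ∀ A ∈ hE.toFinset.powerset.erase Zf,
      (X (0 : Fin 2) - (1 : MvPolynomial (Fin 2) ℤ)) ^ (rk M' M'.E - rk M' (↑A : Set α)) *
        (X 1 - 1) ^ (A.card - rk M' ↑A) =
      (X 0 - 1) ^ (rk M M.E - rk M ↑A) * (X 1 - 1) ^ (A.card - rk M ↑A) := by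
    intro A hA
    have hANe : A ≠ Zf := Finset.ne_of_mem_erase hA
    have hAE : (A : Set α) ⊆ M.E := by
      have h1 := Finset.mem_powerset.1 (Finset.mem_of_mem_erase hA)
      intro x hx
      have h2 := h1 hx
      rwa [Set.Finite.mem_toFinset] at h2
    have hAZ : (A : Set α) ≠ Z := by
      intro h
      apply hANe
      apply Finset.coe_injective
      rw [h, hZfc]
    have hrk : rk M' ↑A = rk M ↑A := by
      by_cases hZA : Z ⊆ ↑A
      · rw [hbM' _ hZA hAE hAZ, hbM _ hZA hAE hAZ]
      · exact haM' _ hZA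
    rw [hrk, hEM']
  rw [Finset.sum_congr rfl hsum]
  have hexp1 : rk M' M'.E - rk M' (↑Zf : Set α) = 0 := by
    rw [hEM', hZfc, hcM']; omega
  have hexp2 : Zf.card - rk M' (↑Zf : Set α) = 0 := by
    rw [hZfc, hcM', hZfcard]; omega
  have hexp3 : rk M M.E - rk M (↑Zf : Set α) = 1 := by
    rw [hZfc, hrkZ]; omega
  have hexp4 : Zf.card - rk M (↑Zf : Set α) = 1 := by
    rw [hZfc, hrkZ, hZfcard]; omega
  rw [hexp1, hexp2, hexp3, hexp4]
  ring


end TuttePaper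
end

section
/- Let M be a sparse paving matroid of rank r with n elements and exactly \lambda circuit-hyperplanes. Then T_M(x,y) = \sum_{i=0}^{r-1} \binom{n}{i}(x-1)^{r-i} + \binom{n}{r} + \lambda (xy - x - y) + \sum_{i=r+1}^{n} \binom{n}{i}(y-1)^{i-r}. -/
open MvPolynomial Finset
open scoped Matroid

namespace TuttePaper

open Classical

variable {α : Type*}

variable {M : Matroid α} {A B I : Set α}

lemma rk_bdd (hE : M.E.Finite) (A : Set α) :
    BddAbove {n | ∃ I, M.Indep I ∧ I ⊆ A ∧ I.ncard = n} := by
  refine ⟨M.E.ncard, ?_⟩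
  rintro n ⟨J, hJ, _, rfl⟩
  exact Set.ncard_le_ncard hJ.subset_ground hE

lemma rk_ubd (hE : M.E.Finite) (hI : M.Indep I) (hIA : I ⊆ A) :
    I.ncard ≤ rk M A :=
  le_csSup (rk_bdd hE A) ⟨I, hI, hIA, rfl⟩

lemma rk_exists (hE : M.E.Finite) (A : Set α) :
    ∃ I, M.Indep I ∧ I ⊆ A ∧ I.ncard = rk M A := by
  have h0 : 0 ∈ {n | ∃ I, M.Indep I ∧ I ⊆ A ∧ I.ncard = n} :=
    ⟨∅, M.empty_indep, Set.empty_subset A, by simp⟩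
  exact Nat.sSup_mem ⟨0, h0⟩ (rk_bdd hE A)

lemma rk_le_ncard (hE : M.E.Finite) (hA : A.Finite) : rk M A ≤ A.ncard := by
  obtain ⟨I, _, hIA, hcard⟩ := rk_exists (M := M) hE A
  exact hcard ▸ Set.ncard_le_ncard hIA hA

lemma rk_indep (hE : M.E.Finite) (hI : M.Indep A) : rk M A = A.ncard :=
  le_antisymm (rk_le_ncard hE (hE.subset hI.subset_ground))
    (rk_ubd hE hI Set.Subset.rfl)

lemma rk_mono (hE : M.E.Finite) (hAB : A ⊆ B) : rk M A ≤ rk M B := by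
  obtain ⟨I, hI, hIA, hcard⟩ := rk_exists (M := M) hE A
  exact hcard ▸ rk_ubd hE hI (hIA.trans hAB)

lemma rk_lt_ncard (hE : M.E.Finite) (hAE : A ⊆ M.E) (hdep : ¬ M.Indep A) :
    rk M A < A.ncard := by
  refine lt_of_le_of_ne (rk_le_ncard hE (hE.subset hAE)) fun h => hdep ?_
  obtain ⟨I, hI, hIA, hcard⟩ := rk_exists (M := M) hE A
  rwa [Set.eq_of_subset_of_ncard_le hIA (by omega) (hE.subset hAE)] at hI

lemma exists_circuit_aux (hE : M.E.Finite) :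
    ∀ n (A : Set α), A.ncard = n → A ⊆ M.E → ¬ M.Indep A →
      ∃ C, C ⊆ A ∧ IsCircuit M C := by
  intro n
  induction n using Nat.strong_induction_on with
  | _ n ih =>
    intro A hcard hAE hdep
    by_cases h : ∀ D ⊂ A, M.Indep D
    · exact ⟨A, Set.Subset.rfl, hAE, hdep, h⟩
    push_neg at h
    obtain ⟨D, hDA, hD⟩ := h
    obtain ⟨C, hCD, hC⟩ := ih D.ncard
      (hcard ▸ Set.ncard_lt_ncard hDA (hE.subset hAE)) D rfl
      (hDA.subset.trans hAE) hD
    exact ⟨C, hCD.trans hDA.subset, hC⟩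

lemma exists_circuit (hE : M.E.Finite) (hAE : A ⊆ M.E) (hdep : ¬ M.Indep A) :
    ∃ C, C ⊆ A ∧ IsCircuit M C :=
  exists_circuit_aux hE A.ncard A rfl hAE hdep



/-- In a paving matroid, sets of size less than the rank are independent. -/
lemma paving_indep (hE : M.E.Finite) (hp : Paving M) (hAE : A ⊆ M.E)
    (hcard : A.ncard < rk M M.E) : M.Indep A := by
  by_contra hdep
  obtain ⟨C, hCA, hC⟩ := exists_circuit hE hAE hdep
  exact absurd ((hp C hC).trans (Set.ncard_le_ncard hCA (hE.subset hAE))) (by omega)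

/-- In a paving matroid, a dependent set of size `r` is a circuit. -/
lemma paving_circuit (hE : M.E.Finite) (hp : Paving M) (hAE : A ⊆ M.E)
    (hcard : A.ncard = rk M M.E) (hdep : ¬ M.Indep A) : IsCircuit M A := by
  obtain ⟨C, hCA, hC⟩ := exists_circuit hE hAE hdep
  rwa [Set.eq_of_subset_of_ncard_le hCA (hcard ▸ hp C hC) (hE.subset hAE)] at hC

lemma dep_nonempty (hdep : ¬ M.Indep A) : A.Nonempty := by
  rw [Set.nonempty_iff_ne_empty]; rintro rfl; exact hdep M.empty_indep

/-- In a sparse paving matroid, a dependent set of size `r` is closed. -/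
lemma sp_closure (hE : M.E.Finite) (hsp : SparsePaving M) (hAE : A ⊆ M.E)
    (hcard : A.ncard = rk M M.E) (hdep : ¬ M.Indep A) : M.closure A = A := by
  have hAfin : A.Finite := hE.subset hAE
  have hcirc : IsCircuit M A := paving_circuit hE hsp.1 hAE hcard hdep
  obtain ⟨a, ha⟩ := dep_nonempty hdep
  set I : Set α := A \ {a} with hIdef
  have hIA : I ⊂ A := Set.sdiff_singleton_ssubset.mpr ha
  have hI : M.Indep I := hcirc.2.2 I hIA
  have hins : insert a I = A := by
    rw [hIdef, Set.insert_diff_singleton, Set.insert_eq_self.mpr ha]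
  have haclI : a ∈ M.closure I := by
    have : M.Dep (insert a I) := by rw [hins]; exact ⟨hdep, hAE⟩
    exact (hI.insert_dep_iff.mp this).1
  have hclA : M.closure A = M.closure I := by
    rw [← hins, M.closure_insert_eq_of_mem_closure haclI]
  have hIcard : I.ncard = rk M M.E - 1 := by
    rw [hIdef, Set.ncard_diff_singleton_of_mem ha, hcard]
  refine subset_antisymm (fun e he => ?_) (M.subset_closure A hAE)
  by_contra heA
  have heE : e ∈ M.E := M.closure_subset_ground A he
  have heI : e ∉ I := fun h => heA h.1
  have heclI : e ∈ M.closure I := hclA ▸ he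
  have hdep' : ¬ M.Indep (insert e I) := by
    intro h
    exact ((hI.insert_indep_iff_of_notMem heI).mp h).2 heclI
  have hr1 : 1 ≤ rk M M.E := by
    have h1 : A.encard ≠ 0 := by simpa using (dep_nonempty hdep).ne_empty
    have : 1 ≤ A.ncard := by
      have := (dep_nonempty hdep)
      rcases this with ⟨x, hx⟩
      have : 0 < A.ncard := by
        rw [Set.ncard_pos hAfin]; exact ⟨x, hx⟩
      omega
    omega
  have hC'E : insert e I ⊆ M.E := Set.insert_subset heE ((hIA.subset).trans hAE)
  have hC'card : (insert e I).ncard = rk M M.E := by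
    rw [Set.ncard_insert_of_notMem heI (hAfin.subset hIA.subset), hIcard]
    omega
  have hC'circ : IsCircuit M (insert e I) := paving_circuit hE hsp.1 hC'E hC'card hdep'
  have hne : A ≠ insert e I := fun h => heA (h ▸ Set.mem_insert e I)
  have hae : a ≠ e := fun h => heA (h ▸ ha)
  have hsd : symmDiff A (insert e I) = {a, e} := by
    ext x
    simp only [Set.mem_symmDiff, hIdef, Set.mem_insert_iff, Set.mem_diff,
      Set.mem_singleton_iff]
    constructor
    · rintro (⟨hxA, hx⟩ | ⟨hx, hxA⟩)
      · push_neg at hx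
        exact Or.inl (hx.2 hxA)
      · rcases hx with rfl | ⟨hx1, _⟩
        · exact Or.inr rfl
        · exact absurd hx1 hxA
    · rintro (rfl | rfl)
      · refine Or.inl ⟨ha, ?_⟩
        rintro (h | ⟨_, h⟩)
        exacts [hae h, h rfl]
      · exact Or.inr ⟨Or.inl rfl, heA⟩
  have := hsp.2 A (insert e I) hcirc hC'circ hcard hC'card hne
  rw [hsd, Set.ncard_pair hae] at this
  omega

lemma flat_of_closure_eq (hAE : A ⊆ M.E) (h : M.closure A = A) : M.IsFlat A := by
  refine ⟨fun I X hIA hIX => ?_, hAE⟩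
  calc X ⊆ M.closure I := hIX.subset_closure
    _ = M.closure A := hIA.closure_eq_closure
    _ = A := h

/-- In a sparse paving matroid, a dependent set of size `r` has rank `r - 1`. -/
lemma sp_rk_dep (hE : M.E.Finite) (hsp : SparsePaving M) (hAE : A ⊆ M.E)
    (hcard : A.ncard = rk M M.E) (hdep : ¬ M.Indep A) :
    rk M A = rk M M.E - 1 := by
  have hAfin : A.Finite := hE.subset hAE
  have hlt : rk M A < A.ncard := rk_lt_ncard hE hAE hdep
  obtain ⟨a, ha⟩ := dep_nonempty hdep
  have hcirc : IsCircuit M A := paving_circuit hE hsp.1 hAE hcard hdep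
  have hIA : A \ {a} ⊂ A := Set.sdiff_singleton_ssubset.mpr ha
  have hge : A.ncard - 1 ≤ rk M A := by
    have := rk_ubd hE (hcirc.2.2 _ hIA) hIA.subset
    rwa [Set.ncard_diff_singleton_of_mem ha] at this
  omega

/-- In a sparse paving matroid, sets larger than the rank have full rank. -/
lemma sp_rk_big (hE : M.E.Finite) (hsp : SparsePaving M) (hAE : A ⊆ M.E)
    (hcard : rk M M.E < A.ncard) : rk M A = rk M M.E := by
  have hAfin : A.Finite := hE.subset hAE
  refine le_antisymm (rk_mono hE hAE) (not_lt.mp fun hlt => ?_)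
  obtain ⟨I, hI, hIA, hIcard⟩ := rk_exists (M := M) hE A
  have hIfin : I.Finite := hE.subset hI.subset_ground
  have hdep_ins : ∀ x ∈ A, x ∉ I → ¬ M.Indep (insert x I) := by
    intro x hxA hxI hind
    have := rk_ubd hE hind (Set.insert_subset hxA hIA)
    rw [Set.ncard_insert_of_notMem hxI hIfin, hIcard] at this
    omega
  obtain ⟨e, heA, heI⟩ :=
    Set.exists_mem_notMem_of_ncard_lt_ncard (hIcard.symm ▸ lt_trans hlt hcard) hIfin
  have hCE : insert e I ⊆ M.E := Set.insert_subset (hAE heA) hI.subset_ground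
  have hCdep := hdep_ins e heA heI
  have hCcard : (insert e I).ncard = I.ncard + 1 := Set.ncard_insert_of_notMem heI hIfin
  have hCr : (insert e I).ncard = rk M M.E := by
    rcases lt_or_eq_of_le (Nat.succ_le_of_lt (hIcard ▸ hlt)) with h | h
    · exact absurd (paving_indep hE hsp.1 hCE (by omega)) hCdep
    · omega
  have hcl : M.closure (insert e I) = insert e I := sp_closure hE hsp hCE hCr hCdep
  obtain ⟨f, hfA, hfC⟩ :=
    Set.exists_mem_notMem_of_ncard_lt_ncard (hCr.symm ▸ hcard) (hE.subset hCE)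
  have hfI : f ∉ I := fun h => hfC (Set.mem_insert_of_mem e h)
  have hfdep := hdep_ins f hfA hfI
  have hfcl : f ∈ M.closure I := by
    have : M.Dep (insert f I) := ⟨hfdep, Set.insert_subset (hAE hfA) hI.subset_ground⟩
    exact (hI.insert_dep_iff.mp this).1
  exact hfC (hcl ▸ M.closure_subset_closure (Set.subset_insert e I) hfcl)


lemma ncard_one_le (hfin : A.Finite) (h : A.Nonempty) : 1 ≤ A.ncard := by
  have : 0 < A.ncard := by rw [Set.ncard_pos hfin]; exact h
  omega

/-- Circuit-hyperplanes of a sparse paving matroid are exactly the dependent sets of size `r`. -/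
lemma ch_iff (hE : M.E.Finite) (hsp : SparsePaving M) (A : Set α) :
    (IsCircuit M A ∧ IsHyperplane M A) ↔
      (A ⊆ M.E ∧ A.ncard = rk M M.E ∧ ¬ M.Indep A) := by
  constructor
  · rintro ⟨hc, hh⟩
    refine ⟨hc.1, ?_, hc.2.1⟩
    have hAfin : A.Finite := hE.subset hc.1
    have hlt : rk M A < A.ncard := rk_lt_ncard hE hc.1 hc.2.1
    obtain ⟨a, ha⟩ := dep_nonempty hc.2.1
    have hIA : A \ {a} ⊂ A := Set.sdiff_singleton_ssubset.mpr ha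
    have hge : A.ncard - 1 ≤ rk M A := by
      have := rk_ubd hE (hc.2.2 _ hIA) hIA.subset
      rwa [Set.ncard_diff_singleton_of_mem ha] at this
    have h1 : 1 ≤ A.ncard := ncard_one_le hAfin ⟨a, ha⟩
    have := hh.2
    omega
  · rintro ⟨hAE, hcard, hdep⟩
    refine ⟨paving_circuit hE hsp.1 hAE hcard hdep,
      flat_of_closure_eq hAE (sp_closure hE hsp hAE hcard hdep), ?_⟩
    have h1 : 1 ≤ A.ncard := ncard_one_le (hE.subset hAE) (dep_nonempty hdep)
    have := sp_rk_dep hE hsp hAE hcard hdep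
    omega

open Classical in
/-- The number of circuit-hyperplanes equals the number of dependent `r`-sets. -/
lemma ch_count (hE : M.E.Finite) (hsp : SparsePaving M) :
    {C : Set α | IsCircuit M C ∧ IsHyperplane M C}.ncard =
      ((Finset.powersetCard (rk M M.E) hE.toFinset).filter
        (fun F : Finset α => ¬ M.Indep (↑F : Set α))).card := by
  classical
  set D := (Finset.powersetCard (rk M M.E) hE.toFinset).filter
    (fun F : Finset α => ¬ M.Indep (↑F : Set α)) with hD
  have hset : {C : Set α | IsCircuit M C ∧ IsHyperplane M C}
      = (fun F : Finset α => (↑F : Set α)) '' ↑D := by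
    ext A
    simp only [Set.mem_setOf_eq, ch_iff hE hsp, Set.mem_image, Finset.mem_coe, hD,
      Finset.mem_filter, Finset.mem_powersetCard]
    constructor
    · rintro ⟨hAE, hcard, hdep⟩
      have hAfin : A.Finite := hE.subset hAE
      refine ⟨hAfin.toFinset, ⟨⟨?_, ?_⟩, ?_⟩, hAfin.coe_toFinset⟩
      · intro x hx
        rw [Set.Finite.mem_toFinset] at hx ⊢
        exact hAE hx
      · rw [← Set.ncard_eq_toFinset_card A hAfin, hcard]
      · rwa [hAfin.coe_toFinset]
    · rintro ⟨F, ⟨⟨hFE, hFcard⟩, hFdep⟩, rfl⟩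
      refine ⟨?_, ?_, hFdep⟩
      · intro x hx
        have := hFE (by simpa using hx)
        rwa [Set.Finite.mem_toFinset] at this
      · rw [Set.ncard_coe_finset, hFcard]
  rw [hset, Set.ncard_image_of_injective _ Finset.coe_injective, Set.ncard_coe_finset]



/-- the Tutte polynomial of a rank-`r` sparse paving matroid with `n` elements
and exactly `lam` circuit-hyperplanes. -/
theorem tutte_sparsePaving (M : Matroid α) (hE : M.E.Finite) (r n lam : ℕ)
    (hr : rk M M.E = r) (hn : M.E.ncard = n) (hsp : SparsePaving M)
    (hlam : {C : Set α | IsCircuit M C ∧ IsHyperplane M C}.ncard = lam) :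
    tutte M = (∑ i ∈ range r, (n.choose i : MvPolynomial (Fin 2) ℤ) * (X 0 - 1) ^ (r - i))
      + (n.choose r : MvPolynomial (Fin 2) ℤ)
      + (lam : MvPolynomial (Fin 2) ℤ) * (X 0 * X 1 - X 0 - X 1)
      + ∑ i ∈ Icc (r + 1) n, (n.choose i : MvPolynomial (Fin 2) ℤ) * (X 1 - 1) ^ (i - r) := by
  classical
  subst hr hn hlam
  have hn' : hE.toFinset.card = M.E.ncard := (Set.ncard_eq_toFinset_card _ hE).symm
  have hrn : rk M M.E ≤ M.E.ncard := rk_le_ncard hE hE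
  have hmem : ∀ i : ℕ, ∀ A ∈ Finset.powersetCard i hE.toFinset,
      (↑A : Set α) ⊆ M.E ∧ (↑A : Set α).ncard = i ∧ A.card = i := by
    intro i A hA
    rw [Finset.mem_powersetCard] at hA
    refine ⟨fun x hx => ?_, ?_, hA.2⟩
    · have := hA.1 hx
      rwa [Set.Finite.mem_toFinset] at this
    · rw [Set.ncard_coe_finset, hA.2]
  -- small buckets
  have hsum_small : ∀ i, i < rk M M.E →
      (∑ A ∈ Finset.powersetCard i hE.toFinset,
        (X 0 - 1 : MvPolynomial (Fin 2) ℤ) ^ (rk M M.E - rk M (↑A : Set α))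
          * (X 1 - 1) ^ (A.card - rk M (↑A : Set α)))
      = (M.E.ncard.choose i : MvPolynomial (Fin 2) ℤ) * (X 0 - 1) ^ (rk M M.E - i) := by
    intro i hi
    have hterm : ∀ A ∈ Finset.powersetCard i hE.toFinset,
        (X 0 - 1 : MvPolynomial (Fin 2) ℤ) ^ (rk M M.E - rk M (↑A : Set α))
          * (X 1 - 1) ^ (A.card - rk M (↑A : Set α))
        = (X 0 - 1) ^ (rk M M.E - i) := by
      intro A hA
      obtain ⟨hAE, hAnc, hAc⟩ := hmem i A hA
      have hind : M.Indep (↑A : Set α) := paving_indep hE hsp.1 hAE (by omega)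
      have hrk : rk M (↑A : Set α) = i := by rw [rk_indep hE hind, hAnc]
      rw [hrk, hAc, Nat.sub_self, pow_zero, mul_one]
    rw [Finset.sum_congr rfl hterm, Finset.sum_const, Finset.card_powersetCard, hn',
      nsmul_eq_mul]
  -- big buckets
  have hsum_big : ∀ i, rk M M.E < i →
      (∑ A ∈ Finset.powersetCard i hE.toFinset,
        (X 0 - 1 : MvPolynomial (Fin 2) ℤ) ^ (rk M M.E - rk M (↑A : Set α))
          * (X 1 - 1) ^ (A.card - rk M (↑A : Set α)))
      = (M.E.ncard.choose i : MvPolynomial (Fin 2) ℤ) * (X 1 - 1) ^ (i - rk M M.E) := by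
    intro i hi
    have hterm : ∀ A ∈ Finset.powersetCard i hE.toFinset,
        (X 0 - 1 : MvPolynomial (Fin 2) ℤ) ^ (rk M M.E - rk M (↑A : Set α))
          * (X 1 - 1) ^ (A.card - rk M (↑A : Set α))
        = (X 1 - 1) ^ (i - rk M M.E) := by
      intro A hA
      obtain ⟨hAE, hAnc, hAc⟩ := hmem i A hA
      have hrk : rk M (↑A : Set α) = rk M M.E := sp_rk_big hE hsp hAE (by omega)
      rw [hrk, hAc, Nat.sub_self, pow_zero, one_mul]
    rw [Finset.sum_congr rfl hterm, Finset.sum_const, Finset.card_powersetCard, hn',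
      nsmul_eq_mul]
  -- middle bucket
  set D := (Finset.powersetCard (rk M M.E) hE.toFinset).filter
    (fun F : Finset α => ¬ M.Indep (↑F : Set α)) with hD
  have hDle : D.card ≤ M.E.ncard.choose (rk M M.E) := by
    rw [← hn', ← Finset.card_powersetCard]
    exact Finset.card_filter_le _ _
  have hsum_mid :
      (∑ A ∈ Finset.powersetCard (rk M M.E) hE.toFinset,
        (X 0 - 1 : MvPolynomial (Fin 2) ℤ) ^ (rk M M.E - rk M (↑A : Set α))
          * (X 1 - 1) ^ (A.card - rk M (↑A : Set α)))
      = ((M.E.ncard.choose (rk M M.E) - D.card : ℕ) : MvPolynomial (Fin 2) ℤ)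
        + (D.card : MvPolynomial (Fin 2) ℤ) * ((X 0 - 1) * (X 1 - 1)) := by
    rw [← Finset.sum_filter_add_sum_filter_not (Finset.powersetCard (rk M M.E) hE.toFinset)
      (fun F : Finset α => M.Indep (↑F : Set α))]
    have h1 : ∀ A ∈ (Finset.powersetCard (rk M M.E) hE.toFinset).filter
        (fun F : Finset α => M.Indep (↑F : Set α)),
        (X 0 - 1 : MvPolynomial (Fin 2) ℤ) ^ (rk M M.E - rk M (↑A : Set α))
          * (X 1 - 1) ^ (A.card - rk M (↑A : Set α)) = 1 := by
      intro A hA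
      rw [Finset.mem_filter] at hA
      obtain ⟨hAE, hAnc, hAc⟩ := hmem _ A hA.1
      have hrk : rk M (↑A : Set α) = rk M M.E := by rw [rk_indep hE hA.2, hAnc]
      rw [hrk, hAc, Nat.sub_self, pow_zero, pow_zero, mul_one]
    have h2 : ∀ A ∈ (Finset.powersetCard (rk M M.E) hE.toFinset).filter
        (fun F : Finset α => ¬ M.Indep (↑F : Set α)),
        (X 0 - 1 : MvPolynomial (Fin 2) ℤ) ^ (rk M M.E - rk M (↑A : Set α))
          * (X 1 - 1) ^ (A.card - rk M (↑A : Set α)) = (X 0 - 1) * (X 1 - 1) := by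
      intro A hA
      rw [Finset.mem_filter] at hA
      obtain ⟨hAE, hAnc, hAc⟩ := hmem _ A hA.1
      have hrk : rk M (↑A : Set α) = rk M M.E - 1 := sp_rk_dep hE hsp hAE hAnc hA.2
      have h1r : 1 ≤ rk M M.E := by
        have := ncard_one_le (hE.subset hAE) (dep_nonempty hA.2)
        omega
      have e1 : rk M M.E - rk M (↑A : Set α) = 1 := by omega
      have e2 : A.card - rk M (↑A : Set α) = 1 := by omega
      rw [e1, e2, pow_one, pow_one]
    have hcount : ((Finset.powersetCard (rk M M.E) hE.toFinset).filter
        (fun F : Finset α => M.Indep (↑F : Set α))).card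
        = M.E.ncard.choose (rk M M.E) - D.card := by
      have := Finset.card_filter_add_card_filter_not
        (s := Finset.powersetCard (rk M M.E) hE.toFinset)
        (fun F : Finset α => M.Indep (↑F : Set α))
      rw [Finset.card_powersetCard, hn'] at this
      rw [hD]
      omega
    rw [Finset.sum_congr rfl h1, Finset.sum_congr rfl h2, Finset.sum_const,
      Finset.sum_const, hcount, ← hD, nsmul_eq_mul, nsmul_eq_mul, mul_one]
  -- assemble
  rw [tutte, dif_pos hE, Finset.sum_powerset, hn',
    Finset.range_eq_Ico,
    ← Finset.sum_Ico_consecutive _ (Nat.zero_le (rk M M.E))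
      (show rk M M.E ≤ M.E.ncard + 1 by omega),
    ← Finset.sum_Ico_consecutive _ (Nat.le_succ (rk M M.E))
      (show rk M M.E + 1 ≤ M.E.ncard + 1 by omega),
    Nat.Ico_succ_singleton, Finset.sum_singleton, Finset.Ico_add_one_right_eq_Icc, hsum_mid,
    ch_count hE hsp, ← hD]
  have e1 : (∑ i ∈ Finset.Ico 0 (rk M M.E),
      ∑ A ∈ Finset.powersetCard i hE.toFinset,
        (X 0 - 1 : MvPolynomial (Fin 2) ℤ) ^ (rk M M.E - rk M (↑A : Set α))
          * (X 1 - 1) ^ (A.card - rk M (↑A : Set α)))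
      = ∑ i ∈ Finset.Ico 0 (rk M M.E),
          (M.E.ncard.choose i : MvPolynomial (Fin 2) ℤ) * (X 0 - 1) ^ (rk M M.E - i) := by
    exact Finset.sum_congr rfl fun i hi => hsum_small i (Finset.mem_Ico.mp hi).2
  have e3 : (∑ i ∈ Finset.Icc (rk M M.E + 1) M.E.ncard,
      ∑ A ∈ Finset.powersetCard i hE.toFinset,
        (X 0 - 1 : MvPolynomial (Fin 2) ℤ) ^ (rk M M.E - rk M (↑A : Set α))
          * (X 1 - 1) ^ (A.card - rk M (↑A : Set α)))
      = ∑ i ∈ Finset.Icc (rk M M.E + 1) M.E.ncard,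
          (M.E.ncard.choose i : MvPolynomial (Fin 2) ℤ) * (X 1 - 1) ^ (i - rk M M.E) := by
    exact Finset.sum_congr rfl fun i hi => hsum_big i (by
      have := (Finset.mem_Icc.mp hi).1; omega)
  rw [e1, e3, Nat.cast_sub hDle, ← Finset.range_eq_Ico]
  ring


end TuttePaper
end

section
/- Let M be a matroid with finite ground set E and rank function r, let e \notin E, and let M+e denote the free extension of M by e. Then (x-1) T_{M+e}(x,y) = x T_M(x,y) + (xy - x - y) T_M(1,y) as an identity in Z[x,y], where T_M(1,y) denotes the Tutte polynomial of M evaluated at x = 1. -/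
open MvPolynomial Finset
open scoped Matroid

namespace TuttePaper

open Classical

variable {α : Type*}

/-- the Tutte polynomial of the free extension `M + e` satisfies
`(x-1) T_{M+e}(x,y) = x T_M(x,y) + (xy - x - y) T_M(1,y)`. -/
theorem tutte_freeExtension (M M' : Matroid α) (hE : M.E.Finite) (e : α) (he : e ∉ M.E)
    (hE' : M'.E = insert e M.E)
    (hrk : ∀ A ⊆ M.E, rk M' A = rk M A)
    (hrke : ∀ A ⊆ M.E, rk M' (insert e A) =
      if rk M A < rk M M.E then rk M A + 1 else rk M M.E) :
    (X 0 - 1) * tutte M' = X 0 * tutte M + (X 0 * X 1 - X 0 - X 1) * tutteX1 M := by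
  classical
  have hEfin' : M'.E.Finite := by rw [hE']; exact hE.insert e
  set s : Finset α := hE.toFinset with hs
  have hsE : (s : Set α) = M.E := hE.coe_toFinset
  have hes : e ∉ s := by simpa [hs, hE.mem_toFinset] using he
  have hts : hEfin'.toFinset = insert e s := by
    ext x
    simp [Set.Finite.mem_toFinset, hE', hs, hE.mem_toFinset]
  have hne : {m | ∃ I, M.Indep I ∧ I ⊆ M.E ∧ I.ncard = m}.Nonempty :=
    ⟨0, ∅, M.empty_indep, Set.empty_subset _, Set.ncard_empty _⟩
  have hmono : ∀ A ⊆ M.E, rk M A ≤ rk M M.E := by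
    intro A hA
    refine csSup_le_csSup ?_ ⟨0, ∅, M.empty_indep, Set.empty_subset _, Set.ncard_empty _⟩ ?_
    · refine ⟨M.E.ncard, ?_⟩
      rintro m ⟨I, hI, hIE, rfl⟩
      exact Set.ncard_le_ncard hIE hE
    · rintro m ⟨I, hI, hIA, rfl⟩
      exact ⟨I, hI, hIA.trans hA, rfl⟩
  have hcard : ∀ A : Set α, A.Finite → rk M A ≤ A.ncard := by
    intro A hA
    refine csSup_le ⟨0, ∅, M.empty_indep, Set.empty_subset _, Set.ncard_empty _⟩ ?_
    rintro m ⟨I, hI, hIA, rfl⟩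
    exact Set.ncard_le_ncard hIA hA
  set n := rk M M.E with hn
  have hn' : rk M' M'.E = n := by
    rw [hE', hrke M.E subset_rfl, if_neg (lt_irrefl _)]
  have hsub : ∀ A ∈ s.powerset, (A : Set α) ⊆ M.E := by
    intro A hA
    rw [← hsE]
    exact_mod_cast Finset.mem_powerset.mp hA
  have hT : tutte M = ∑ A ∈ s.powerset,
      (X 0 - 1) ^ (n - rk M ↑A) * (X 1 - 1) ^ (A.card - rk M ↑A) := by
    rw [tutte, dif_pos hE]
  have hT' : tutte M' =
      (∑ A ∈ s.powerset, (X 0 - 1) ^ (n - rk M ↑A) * (X 1 - 1) ^ (A.card - rk M ↑A))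
      + ∑ A ∈ s.powerset,
        (X 0 - 1) ^ (n - (if rk M ↑A < n then rk M ↑A + 1 else n)) *
        (X 1 - 1) ^ (A.card + 1 - (if rk M ↑A < n then rk M ↑A + 1 else n)) := by
    rw [tutte, dif_pos hEfin', hts, Finset.sum_powerset_insert hes]
    congr 1
    · refine Finset.sum_congr rfl fun A hA => ?_
      rw [hn', hrk ↑A (hsub A hA)]
    · refine Finset.sum_congr rfl fun A hA => ?_
      have heA : e ∉ A := fun h => hes (Finset.mem_powerset.mp hA h)
      rw [hn', Finset.coe_insert, hrke ↑A (hsub A hA), Finset.card_insert_of_notMem heA]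
  have hX1 : tutteX1 M = ∑ A ∈ s.powerset,
      (0 : MvPolynomial (Fin 2) ℤ) ^ (n - rk M ↑A) * (X 1 - 1) ^ (A.card - rk M ↑A) := by
    rw [tutteX1, hT, eval₂_sum]
    refine Finset.sum_congr rfl fun A hA => ?_
    simp [eval₂_mul, eval₂_pow, eval₂_sub, eval₂_X, eval₂_one]
  rw [hT, hT', hX1, mul_add, Finset.mul_sum, Finset.mul_sum, Finset.mul_sum, Finset.mul_sum,
    ← Finset.sum_add_distrib, ← Finset.sum_add_distrib]
  refine Finset.sum_congr rfl fun A hA => ?_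
  have hle : rk M ↑A ≤ n := hmono ↑A (hsub A hA)
  have hlec : rk M ↑A ≤ A.card := by
    simpa [Set.ncard_coe_finset] using hcard ↑A A.finite_toSet
  by_cases h : rk M ↑A < n
  · rw [if_pos h]
    obtain ⟨k, hk⟩ : ∃ k, n - rk M ↑A = k + 1 := ⟨n - rk M ↑A - 1, by omega⟩
    rw [hk, show n - (rk M ↑A + 1) = k from by omega,
      show A.card + 1 - (rk M ↑A + 1) = A.card - rk M ↑A from by omega,
      zero_pow (Nat.succ_ne_zero k)]
    ring
  · rw [if_neg h]
    have hrn : rk M ↑A = n := le_antisymm hle (not_lt.mp h)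
    rw [hrn, Nat.sub_self, show A.card + 1 - n = (A.card - n) + 1 from by omega]
    ring

end TuttePaper
end

section
/- For integers 0 < r < n, the Tutte polynomial of the uniform matroid U_{r,n} equals \sum_{j=1}^{n-r} \binom{n-j-1}{r-1} y^j + \sum_{i=1}^{r} \binom{n-i-1}{n-r-1} x^i. -/
open MvPolynomial Finset
open scoped Matroid

namespace TuttePaper

open Classical

variable {α : Type*}

/-- helper: split off the `0` term of a `range` sum, rest as `Icc 1 m`. -/
lemma sum_range_succ_eq_Icc {R : Type*} [AddCommMonoid R] (f : ℕ → R) (m : ℕ) :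
    ∑ i ∈ range (m+1), f i = f 0 + ∑ i ∈ Icc 1 m, f i := by
  induction m with
  | zero => simp
  | succ m ih =>
      rw [Finset.sum_range_succ, ih, Finset.sum_Icc_succ_top (by omega : 1 ≤ m+1)]
      abel

/-- core identity: for `r < n`,
`∑_{k=0}^{r} C(n,k)(x-1)^{r-k} = ∑_{i=0}^{r} C(n-1-i, r-i) x^i`. -/
lemma key {R : Type*} [CommRing R] (x : R) :
    ∀ (r n : ℕ), r < n →
      ∑ k ∈ range (r+1), (n.choose k : R) * (x-1)^(r-k)
        = ∑ i ∈ range (r+1), ((n-1-i).choose (r-i) : R) * x^i := by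
  intro r
  induction r with
  | zero => intro n hn; simp
  | succ r ih =>
      intro n hn
      have ihn := ih n (by omega)
      set S : R := ∑ i ∈ range (r+1), ((n-1-i).choose (r-i) : R) * x^i with hSdef
      have hL : ∑ k ∈ range (r+1+1), (n.choose k : R) * (x-1)^(r+1-k)
          = (x-1) * S + (n.choose (r+1) : R) := by
        rw [Finset.sum_range_succ, Nat.sub_self, pow_zero, mul_one, ← ihn, Finset.mul_sum]
        congr 1
        refine Finset.sum_congr rfl fun k hk => ?_
        rw [Finset.mem_range] at hk
        have : r + 1 - k = (r - k) + 1 := by omega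
        rw [this, pow_succ]
        ring
      have hR : ∑ i ∈ range (r+1+1), ((n-1-i).choose (r+1-i) : R) * x^i
          = (∑ i ∈ range (r+1), ((n-2-i).choose (r-i) : R) * x^(i+1))
            + ((n-1).choose (r+1) : R) := by
        rw [Finset.sum_range_succ']
        simp only [pow_zero, mul_one, Nat.sub_zero]
        congr 1
        refine Finset.sum_congr rfl fun i hi => ?_
        have h1 : n-1-(i+1) = n-2-i := by omega
        have h2 : r+1-(i+1) = r-i := by omega
        rw [h1, h2]
      set T : R := ∑ i ∈ range (r+1), ((n-2-i).choose (r-i) : R) * x^(i+1) with hTdef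
      set U : R := ∑ i ∈ range r, ((n-2-i).choose (r-1-i) : R) * x^(i+1) with hUdef
      have hxS : x * S = T + U := by
        rw [hSdef, Finset.mul_sum, hTdef, hUdef]
        have e1 : ∀ i ∈ range (r+1), x * (((n-1-i).choose (r-i) : R) * x^i)
            = ((n-1-i).choose (r-i) : R) * x^(i+1) := by
          intro i _; rw [pow_succ]; ring
        rw [Finset.sum_congr rfl e1, Finset.sum_range_succ, Finset.sum_range_succ]
        have hlast : ((n-1-r).choose (r-r) : R) = ((n-2-r).choose (r-r) : R) := by
          rw [Nat.sub_self]; simp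
        rw [hlast]
        have e2 : ∀ i ∈ range r, ((n-1-i).choose (r-i) : R) * x^(i+1)
            = ((n-2-i).choose (r-i) : R) * x^(i+1) + ((n-2-i).choose (r-1-i) : R) * x^(i+1) := by
          intro i hi
          rw [Finset.mem_range] at hi
          have h1 : n-1-i = (n-2-i)+1 := by omega
          have h2 : r-i = (r-1-i)+1 := by omega
          rw [h1, h2, Nat.choose_succ_succ]
          push_cast
          ring
        rw [Finset.sum_congr rfl e2, Finset.sum_add_distrib]
        ring
      have hS : S = ((n-1).choose r : R) + U := by
        rw [hSdef, Finset.sum_range_succ']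
        simp only [pow_zero, mul_one, Nat.sub_zero]
        rw [hUdef, add_comm]
        congr 1
        refine Finset.sum_congr rfl fun i hi => ?_
        have h1 : n-1-(i+1) = n-2-i := by omega
        have h2 : r-(i+1) = r-1-i := by omega
        rw [h1, h2]
      have hPascal : (n.choose (r+1) : R) = ((n-1).choose r : R) + ((n-1).choose (r+1) : R) := by
        have hnat : n.choose (r+1) = (n-1).choose r + (n-1).choose (r+1) := by
          conv_lhs => rw [show n = (n-1)+1 by omega]
          rw [Nat.choose_succ_succ]
        rw [hnat]
        push_cast
        ring
      rw [hL, hR]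
      linear_combination hxS - hS + hPascal

lemma rk_eq (M : Matroid α) (r : ℕ) (hunif : ∀ I, M.Indep I ↔ I ⊆ M.E ∧ I.ncard ≤ r)
    (A : Set α) (hA : A ⊆ M.E) (hfin : A.Finite) : rk M A = min A.ncard r := by
  have hset : {m | ∃ I, M.Indep I ∧ I ⊆ A ∧ I.ncard = m} = Set.Iic (min A.ncard r) := by
    ext m
    simp only [Set.mem_setOf_eq, Set.mem_Iic, le_min_iff]
    constructor
    · rintro ⟨I, hI, hIA, rfl⟩
      exact ⟨Set.ncard_le_ncard hIA hfin, ((hunif I).1 hI).2⟩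
    · rintro ⟨h1, h2⟩
      obtain ⟨I, hIA, hcard⟩ := Set.exists_subset_card_eq (show m ≤ A.ncard from h1)
      exact ⟨I, (hunif I).2 ⟨hIA.trans hA, by omega⟩, hIA, hcard⟩
  rw [rk, hset, csSup_Iic]

/-- the Tutte polynomial of the uniform matroid `U_{r,n}` for `0 < r < n`,
written in terms of its coefficients. -/
theorem tutte_uniform' (M : Matroid α) (hE : M.E.Finite) (r n : ℕ) (h0 : 0 < r) (hrn : r < n)
    (hn : M.E.ncard = n) (hunif : ∀ I, M.Indep I ↔ I ⊆ M.E ∧ I.ncard ≤ r) :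
    tutte M =
      (∑ j ∈ Icc 1 (n - r), ((n - j - 1).choose (r - 1) : MvPolynomial (Fin 2) ℤ) * X 1 ^ j)
      + ∑ i ∈ Icc 1 r, ((n - i - 1).choose (n - r - 1) : MvPolynomial (Fin 2) ℤ) * X 0 ^ i := by
  have hcard : hE.toFinset.card = n := by
    rw [← Set.ncard_eq_toFinset_card _ hE, hn]
  have hrkE : rk M M.E = r := by
    rw [rk_eq M r hunif M.E subset_rfl hE, hn, min_eq_right hrn.le]
  have hrkA : ∀ A ∈ hE.toFinset.powerset, rk M (↑A : Set α) = min A.card r := by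
    intro A hA
    rw [Finset.mem_powerset] at hA
    have hsub : (↑A : Set α) ⊆ M.E := fun z hz => (Set.Finite.mem_toFinset hE).1 (hA hz)
    rw [rk_eq M r hunif ↑A hsub (A.finite_toSet), Set.ncard_coe_finset]
  rw [tutte, dif_pos hE]
  have step1 : ∑ A ∈ hE.toFinset.powerset,
      (X 0 - 1 : MvPolynomial (Fin 2) ℤ) ^ (rk M M.E - rk M ↑A) * (X 1 - 1) ^ (A.card - rk M ↑A)
      = ∑ k ∈ range (n + 1), (n.choose k : MvPolynomial (Fin 2) ℤ)
          * ((X 0 - 1) ^ (r - min k r) * (X 1 - 1) ^ (k - min k r)) := by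
    rw [Finset.sum_congr rfl (fun A hA => by rw [hrkA A hA, hrkE])]
    rw [Finset.sum_powerset_apply_card
      (fun k => (X 0 - 1 : MvPolynomial (Fin 2) ℤ) ^ (r - min k r) * (X 1 - 1) ^ (k - min k r)),
      hcard]
    exact Finset.sum_congr rfl fun k _ => by rw [nsmul_eq_mul]
  rw [step1, Finset.range_eq_Ico,
    ← Finset.sum_Ico_consecutive _ (Nat.zero_le (r+1)) (by omega : r+1 ≤ n+1)]
  have hlow : ∑ k ∈ Finset.Ico 0 (r+1), (n.choose k : MvPolynomial (Fin 2) ℤ)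
        * ((X 0 - 1) ^ (r - min k r) * (X 1 - 1) ^ (k - min k r))
      = ∑ k ∈ range (r+1), (n.choose k : MvPolynomial (Fin 2) ℤ) * (X 0 - 1) ^ (r - k) := by
    rw [← Finset.range_eq_Ico]
    refine Finset.sum_congr rfl fun k hk => ?_
    rw [Finset.mem_range] at hk
    rw [min_eq_left (by omega : k ≤ r), Nat.sub_self k, pow_zero, mul_one]
  have hhigh : ∑ k ∈ Finset.Ico (r+1) (n+1), (n.choose k : MvPolynomial (Fin 2) ℤ)
        * ((X 0 - 1) ^ (r - min k r) * (X 1 - 1) ^ (k - min k r))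
      = ∑ k ∈ Finset.Ico (r+1) (n+1),
          (n.choose k : MvPolynomial (Fin 2) ℤ) * (X 1 - 1) ^ (k - r) := by
    refine Finset.sum_congr rfl fun k hk => ?_
    rw [Finset.mem_Ico] at hk
    rw [min_eq_right (by omega : r ≤ k), Nat.sub_self r, pow_zero, one_mul]
  rw [hlow, hhigh]
  have hext : ∑ k ∈ Finset.Ico r (n+1),
        (n.choose k : MvPolynomial (Fin 2) ℤ) * (X 1 - 1) ^ (k - r)
      = (n.choose r : MvPolynomial (Fin 2) ℤ)
        + ∑ k ∈ Finset.Ico (r+1) (n+1),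
            (n.choose k : MvPolynomial (Fin 2) ℤ) * (X 1 - 1) ^ (k - r) := by
    rw [Finset.sum_eq_sum_Ico_succ_bot (by omega : r < n+1), Nat.sub_self, pow_zero, mul_one]
  have hrefl : ∑ k ∈ Finset.Ico r (n+1),
        (n.choose k : MvPolynomial (Fin 2) ℤ) * (X 1 - 1) ^ (k - r)
      = ∑ j ∈ range (n - r + 1),
          (n.choose j : MvPolynomial (Fin 2) ℤ) * (X 1 - 1) ^ (n - r - j) := by
    rw [Finset.sum_Ico_eq_sum_range]
    rw [show n + 1 - r = (n - r) + 1 by omega]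
    rw [← Finset.sum_range_reflect
      (fun j => (n.choose j : MvPolynomial (Fin 2) ℤ) * (X 1 - 1) ^ (n - r - j)) (n - r + 1)]
    refine Finset.sum_congr rfl fun i hi => ?_
    rw [Finset.mem_range] at hi
    have e1 : n - r + 1 - 1 - i = n - r - i := by omega
    have e2 : n.choose (n - r - i) = n.choose (r + i) := by
      rw [show n - r - i = n - (r + i) by omega, Nat.choose_symm (by omega)]
    have e3 : n - r - (n - r - i) = i := by omega
    have e4 : r + i - r = i := by omega
    rw [e1, e2, e3, e4]
  have keyx := key (X 0 : MvPolynomial (Fin 2) ℤ) r n hrn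
  have keyy := key (X 1 : MvPolynomial (Fin 2) ℤ) (n - r) n (by omega)
  have splitx : ∑ i ∈ range (r+1), ((n-1-i).choose (r-i) : MvPolynomial (Fin 2) ℤ) * X 0 ^ i
      = ((n-1).choose r : MvPolynomial (Fin 2) ℤ)
        + ∑ i ∈ Icc 1 r, ((n - i - 1).choose (n - r - 1) : MvPolynomial (Fin 2) ℤ) * X 0 ^ i := by
    rw [sum_range_succ_eq_Icc (fun i => ((n-1-i).choose (r-i) : MvPolynomial (Fin 2) ℤ) * X 0 ^ i) r]
    refine congrArg₂ (· + ·) ?_ ?_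
    · norm_num
    · refine Finset.sum_congr rfl fun i hi => ?_
      rw [Finset.mem_Icc] at hi
      have h1 : (n-1-i).choose (r-i) = (n-i-1).choose (n-r-1) := by
        rw [show n-1-i = n-i-1 by omega, show n-r-1 = (n-i-1) - (r-i) by omega,
          Nat.choose_symm (by omega : r-i ≤ n-i-1)]
      rw [h1]
  have splity : ∑ j ∈ range (n-r+1),
        ((n-1-j).choose (n-r-j) : MvPolynomial (Fin 2) ℤ) * X 1 ^ j
      = ((n-1).choose (n-r) : MvPolynomial (Fin 2) ℤ)
        + ∑ j ∈ Icc 1 (n-r), ((n - j - 1).choose (r - 1) : MvPolynomial (Fin 2) ℤ) * X 1 ^ j := by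
    rw [sum_range_succ_eq_Icc
      (fun j => ((n-1-j).choose (n-r-j) : MvPolynomial (Fin 2) ℤ) * X 1 ^ j) (n-r)]
    refine congrArg₂ (· + ·) ?_ ?_
    · norm_num
    · refine Finset.sum_congr rfl fun j hj => ?_
      rw [Finset.mem_Icc] at hj
      have h1 : (n-1-j).choose (n-r-j) = (n-j-1).choose (r-1) := by
        rw [show n-1-j = n-j-1 by omega, show r-1 = (n-j-1) - (n-r-j) by omega,
          Nat.choose_symm (by omega : n-r-j ≤ n-j-1)]
      rw [h1]
  have hconst : ((n-1).choose r : MvPolynomial (Fin 2) ℤ) + ((n-1).choose (n-r))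
      = (n.choose r : MvPolynomial (Fin 2) ℤ) := by
    have hnat : (n-1).choose r + (n-1).choose (n-r) = n.choose r := by
      rw [show n - r = (n-1) - (r-1) by omega, Nat.choose_symm (by omega : r-1 ≤ n-1)]
      conv_rhs => rw [show n = (n-1)+1 by omega, show r = (r-1)+1 by omega]
      rw [Nat.choose_succ_succ, show (r-1).succ = r by omega]
      exact Nat.add_comm _ _
    rw [← hnat]
    push_cast
    ring
  linear_combination keyx + hrefl - hext + keyy + splitx + splity + hconst

end TuttePaper
end
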